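/- Let n ≥ 2, m ≥ 3, and let P be an m-th order, n-dimensional stochastic tensor on S = {1,…,n}. Suppose i, j ∈ S are distinct states that communicate (i ↔ j), and suppose that Σ_{k=1}^{∞} p^{(k)}_{j j j3 … j_m} = ∞ for all j3,…,j_m ∈ S (the series of nonnegative terms diverges for every tail). Then Σ_{k=1}^{∞} p^{(k)}_{i i i3 … i_m} = ∞ for all i3,…,i_m ∈ S. -/

import Mathlib

open Finset

/-- An `m`-th order, `n`-dimensional tensor with `m = r + 2`: the entry
`p_{i₁ i₂ … i_m}` is written `P i₁ t`, where `t = (i₂, …, i_m)` is the tail of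
`m - 1 = r + 1` indices. -/
abbrev HOTensor (n r : ℕ) := Fin n → (Fin (r + 1) → Fin n) → ℝ

/-- `P` is a stochastic tensor. -/
def IsStochasticT {n r : ℕ} (P : HOTensor n r) : Prop :=
  (∀ i t, 0 ≤ P i t ∧ P i t ≤ 1) ∧ ∀ t, ∑ i : Fin n, P i t = 1

/-- The product `A ⊠ B`:
`(A ⊠ B)_{i₁ i₂ … i_m} = Σ_j a_{i₁ j i₂ … i_{m-1}} b_{j i₂ … i_m}`. -/
def tmul {n r : ℕ} (A B : HOTensor n r) : HOTensor n r :=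
  fun i t => ∑ j : Fin n, A i (Fin.cons j (Fin.init t)) * B j t

/-- Tensor powers: `tpow P k` is `P^k`, with entries the `k`-step transition
probabilities `p^{(k)}_{i₁ … i_m}`; `P^0` is the identity tensor. -/
def tpow {n r : ℕ} (P : HOTensor n r) : ℕ → HOTensor n r
  | 0 => fun i t => if i = t 0 then 1 else 0
  | k + 1 => tmul (tpow P k) P

/-- `fpp P k` is the `(k+1)`-step first passage probability tensor `F^{[k+1]}`:
`f^{[1]} = p`, and `f^{[k+1]}_{i₁ i₂ … i_m} = Σ_{j ≠ i₁} f^{[k]}_{i₁ j i₂ … i_{m-1}} p_{j i₂ … i_m}`. -/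
def fpp {n r : ℕ} (P : HOTensor n r) : ℕ → HOTensor n r
  | 0 => P
  | k + 1 => fun i t =>
      ∑ j ∈ Finset.univ.filter (fun j => j ≠ i), fpp P k i (Fin.cons j (Fin.init t)) * P j t

/-- The ever-reaching probability `f_{i₁ i₂ … i_m} = Σ_{k=1}^∞ f^{[k]}_{i₁ i₂ … i_m}`. -/
noncomputable def everReach {n r : ℕ} (P : HOTensor n r) : HOTensor n r :=
  fun i t => ∑' k : ℕ, fpp P k i t

/-- State `j` is reachable from state `i` (`i → j`): for every choice of
`i₃, …, i_m` there is `k ≥ 0` with `p^{(k)}_{j i i₃ … i_m} > 0`. -/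
def Reach {n r : ℕ} (P : HOTensor n r) (i j : Fin n) : Prop :=
  ∀ u : Fin r → Fin n, ∃ k : ℕ, 0 < tpow P k j (Fin.cons i u)

/-- States `i` and `j` communicate (`i ↔ j`). -/
def Comm {n r : ℕ} (P : HOTensor n r) (i j : Fin n) : Prop :=
  Reach P i j ∧ Reach P j i

/-- State `i` is recurrent: `f_{i i i₃ … i_m} = 1` for all `i₃, …, i_m`. -/
def RecurrentState {n r : ℕ} (P : HOTensor n r) (i : Fin n) : Prop :=
  ∀ u : Fin r → Fin n, everReach P i (Fin.cons i u) = 1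

/-- State `i` is fully transient: `f_{i i i₃ … i_m} < 1` for all `i₃, …, i_m`. -/
def FullyTransientState {n r : ℕ} (P : HOTensor n r) (i : Fin n) : Prop :=
  ∀ u : Fin r → Fin n, everReach P i (Fin.cons i u) < 1

/-- `P` is ergodic: for all indices there is `k ≥ 1` with `p^{(k)}_{i₁ … i_m} > 0`. -/
def ErgodicT {n r : ℕ} (P : HOTensor n r) : Prop :=
  ∀ (i : Fin n) (t : Fin (r + 1) → Fin n), ∃ k : ℕ, 1 ≤ k ∧ 0 < tpow P k i t

/-- `P` is regular: some power `P^k`, `k ≥ 1`, has all entries positive. -/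
def RegularT {n r : ℕ} (P : HOTensor n r) : Prop :=
  ∃ k : ℕ, 1 ≤ k ∧ ∀ (i : Fin n) (t : Fin (r + 1) → Fin n), 0 < tpow P k i t

/-- The reduced transition matrix `Q` of `P`: rows and columns are indexed by
`(m-1)`-tuples; the entry in row `(i₁, …, i_{m-1})` and column `(j₁, …, j_{m-1})`
is `p_{i₁ i₂ … i_{m-1} j_{m-1}}` if `j_ℓ = i_{ℓ+1}` for `ℓ = 1, …, m-2`, else `0`. -/
def reducedT {n r : ℕ} (P : HOTensor n r) :
    Matrix (Fin (r + 1) → Fin n) (Fin (r + 1) → Fin n) ℝ :=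
  fun u v =>
    if ∀ ℓ : Fin r, v ℓ.castSucc = u ℓ.succ then
      P (u 0) (Fin.snoc (Fin.tail u) (v (Fin.last r)))
    else 0

namespace DTaux

variable {n r : ℕ}

lemma q_nonneg (P : HOTensor n r) (hP : IsStochasticT P)
    (u v : Fin (r + 1) → Fin n) : 0 ≤ reducedT P u v := by
  unfold reducedT
  split
  · exact (hP.1 _ _).1
  · exact le_refl 0

lemma qpow_nonneg (P : HOTensor n r) (hP : IsStochasticT P) (k : ℕ)
    (u v : Fin (r + 1) → Fin n) : 0 ≤ (reducedT P ^ k) u v := by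
  induction k generalizing u v with
  | zero => rw [pow_zero, Matrix.one_apply]; split <;> norm_num
  | succ k ih =>
    rw [pow_succ, Matrix.mul_apply]
    exact Finset.sum_nonneg fun w _ => mul_nonneg (ih u w) (q_nonneg P hP w v)

lemma entry_mul_le {I : Type*} [Fintype I] (A B : Matrix I I ℝ)
    (hA : ∀ u v, 0 ≤ A u v) (hB : ∀ u v, 0 ≤ B u v) (x z y : I) :
    A x z * B z y ≤ (A * B) x y := by
  rw [Matrix.mul_apply]
  exact Finset.single_le_sum (fun w _ => mul_nonneg (hA x w) (hB w y)) (Finset.mem_univ z)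

lemma red_cons (P : HOTensor n r) (j : Fin n) (t : Fin (r + 1) → Fin n) :
    reducedT P (Fin.cons j (Fin.init t)) t = P j t := by
  unfold reducedT
  rw [if_pos]
  · simp [Fin.tail_cons, Fin.snoc_init_self]
  · intro ℓ
    simp [Fin.cons_succ, Fin.init]

lemma red_cons_ne (P : HOTensor n r) (j : Fin n) (s : Fin r → Fin n)
    (t : Fin (r + 1) → Fin n) (hs : s ≠ Fin.init t) :
    reducedT P (Fin.cons j s) t = 0 := by
  unfold reducedT
  rw [if_neg]
  intro h
  apply hs
  funext ℓ
  have := h ℓ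
  simpa [Fin.cons_succ, Fin.init] using this.symm

lemma tpow_eq (P : HOTensor n r) (k : ℕ) (i : Fin n) (t : Fin (r + 1) → Fin n) :
    tpow P k i t
      = ∑ u : Fin (r + 1) → Fin n, if u 0 = i then (reducedT P ^ k) u t else 0 := by
  induction k generalizing t with
  | zero =>
    show (if i = t 0 then (1:ℝ) else 0) = _
    rw [Finset.sum_eq_single t]
    · simp only [pow_zero, Matrix.one_apply_eq]
      by_cases h : i = t 0
      · rw [if_pos h, if_pos h.symm]
      · rw [if_neg h, if_neg (fun hh => h hh.symm)]
    · intro u _ hu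
      simp only [pow_zero, Matrix.one_apply_ne hu]
      split <;> rfl
    · simp
  | succ k ih =>
    show (∑ j : Fin n, tpow P k i (Fin.cons j (Fin.init t)) * P j t) = _
    have key : ∀ u : Fin (r + 1) → Fin n,
        (reducedT P ^ (k + 1)) u t
          = ∑ j : Fin n, (reducedT P ^ k) u (Fin.cons j (Fin.init t)) * P j t := by
      intro u
      rw [pow_succ, Matrix.mul_apply,
        ← Equiv.sum_comp (Fin.consEquiv (fun _ : Fin (r+1) => Fin n))
          (fun w => (reducedT P ^ k) u w * reducedT P w t)]
      rw [Fintype.sum_prod_type]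
      refine Finset.sum_congr rfl fun j _ => ?_
      rw [Finset.sum_eq_single (Fin.init t)]
      · rw [show ((Fin.consEquiv fun _ : Fin (r+1) => Fin n) (j, Fin.init t)) = Fin.cons j (Fin.init t) from rfl, red_cons]
      · intro s _ hs
        rw [show ((Fin.consEquiv fun _ : Fin (r+1) => Fin n) (j, s)) = Fin.cons j s from rfl, red_cons_ne P j s t hs, mul_zero]
      · simp
    calc (∑ j : Fin n, tpow P k i (Fin.cons j (Fin.init t)) * P j t)
        = ∑ j : Fin n, ∑ u : Fin (r+1) → Fin n,
            (if u 0 = i then (reducedT P ^ k) u (Fin.cons j (Fin.init t)) else 0) * P j t := by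
          refine Finset.sum_congr rfl fun j _ => ?_
          rw [ih, Finset.sum_mul]
      _ = ∑ u : Fin (r+1) → Fin n, ∑ j : Fin n,
            (if u 0 = i then (reducedT P ^ k) u (Fin.cons j (Fin.init t)) * P j t else 0) := by
          rw [Finset.sum_comm]
          exact Finset.sum_congr rfl fun u _ => Finset.sum_congr rfl fun j _ => by
            split <;> simp
      _ = ∑ u : Fin (r+1) → Fin n, if u 0 = i then (reducedT P ^ (k+1)) u t else 0 := by
          refine Finset.sum_congr rfl fun u _ => ?_
          rw [key]
          split <;> simp

end DTaux

/-- if distinct states `i`, `j` communicate and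
`Σ_{k≥1} p^{(k)}_{j j j₃ … j_m} = ∞` for all tails, then
`Σ_{k≥1} p^{(k)}_{i i i₃ … i_m} = ∞` for all tails (divergence = non-summability). -/



theorem divergence_transfers (n r : ℕ) (hn : 2 ≤ n) (hr : 1 ≤ r)
    (P : HOTensor n r) (hP : IsStochasticT P) (i j : Fin n) (hij : i ≠ j)
    (hcomm : Comm P i j)
    (hdiv : ∀ u : Fin r → Fin n,
      ¬ Summable (fun k : ℕ => tpow P (k + 1) j (Fin.cons j u))) :
    ∀ u : Fin r → Fin n,
      ¬ Summable (fun k : ℕ => tpow P (k + 1) i (Fin.cons i u)) := by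
  intro u'
  have hq : ∀ (k : ℕ) (u v : Fin (r+1) → Fin n), 0 ≤ (reducedT P ^ k) u v :=
    fun k => DTaux.qpow_nonneg P hP k
  obtain ⟨a, ha⟩ := hcomm.1 u'
  have ha0 : a ≠ 0 := by
    rintro rfl
    simp [tpow, Fin.cons_zero, Ne.symm hij] at ha
  obtain ⟨a', rfl⟩ := Nat.exists_eq_succ_of_ne_zero ha0
  rw [DTaux.tpow_eq] at ha
  obtain ⟨w, -, hw⟩ := Finset.exists_lt_of_sum_lt (s := (Finset.univ : Finset (Fin (r+1) → Fin n)))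
    (f := fun _ => (0:ℝ)) (by simpa using ha)
  have hw0 : w 0 = j := by
    by_contra h
    rw [if_neg h] at hw; exact lt_irrefl 0 hw
  rw [if_pos hw0] at hw
  have hcw : Fin.cons j (Fin.tail w) = w := by rw [← hw0]; exact Fin.cons_self_tail w
  have hdivw : ¬ Summable (fun k : ℕ => tpow P (k+1) j w) := by
    have := hdiv (Fin.tail w)
    rwa [hcw] at this
  have hv : ∃ v : Fin (r+1) → Fin n, v 0 = j ∧
      ¬ Summable (fun k : ℕ => (reducedT P ^ (k+1)) v w) := by
    by_contra h
    push_neg at h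
    apply hdivw
    have heq : (fun k : ℕ => tpow P (k+1) j w)
        = fun k => ∑ u : Fin (r+1) → Fin n, if u 0 = j then (reducedT P ^ (k+1)) u w else 0 :=
      funext fun k => DTaux.tpow_eq P (k+1) j w
    rw [heq]
    apply summable_sum
    intro u _
    by_cases hu : u 0 = j
    · simp only [if_pos hu]
      exact h u hu
    · simp only [if_neg hu]
      exact summable_zero
  obtain ⟨v, hv0, hvns⟩ := hv
  obtain ⟨b, hb⟩ := hcomm.2 (Fin.tail v)
  have hcv : Fin.cons j (Fin.tail v) = v := by rw [← hv0]; exact Fin.cons_self_tail v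
  rw [hcv, DTaux.tpow_eq] at hb
  obtain ⟨x, -, hx⟩ := Finset.exists_lt_of_sum_lt (s := (Finset.univ : Finset (Fin (r+1) → Fin n)))
    (f := fun _ => (0:ℝ)) (by simpa using hb)
  have hx0 : x 0 = i := by
    by_contra h
    rw [if_neg h] at hx; exact lt_irrefl 0 hx
  rw [if_pos hx0] at hx
  intro hsum
  apply hvns
  set c := b + a' + 1 with hc
  have hshift : Summable (fun k : ℕ => tpow P (k + c + 1) i (Fin.cons i u')) :=
    (summable_nat_add_iff (f := fun k => tpow P (k+1) i (Fin.cons i u')) c).2 hsum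
  set t : Fin (r+1) → Fin n := Fin.cons i u' with ht
  have hbound : ∀ k : ℕ,
      ((reducedT P ^ b) x v * (reducedT P ^ (a'+1)) w t) * (reducedT P ^ (k+1)) v w
        ≤ tpow P (k + c + 1) i t := by
    intro k
    have h1 : (reducedT P ^ (k+1)) v w * (reducedT P ^ (a'+1)) w t
        ≤ (reducedT P ^ ((k+1)+(a'+1))) v t :=
      le_trans (DTaux.entry_mul_le _ _ (hq _) (hq _) v w t)
        (le_of_eq (congrFun (congrFun (pow_add (reducedT P) (k+1) (a'+1)).symm v) t))
    have h2 : (reducedT P ^ b) x v * (reducedT P ^ ((k+1)+(a'+1))) v t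
        ≤ (reducedT P ^ (k + c + 1)) x t := by
      have hdecomp : k + c + 1 = b + ((k+1)+(a'+1)) := by omega
      refine le_trans (DTaux.entry_mul_le _ _ (hq _) (hq _) x v t) (le_of_eq ?_)
      rw [hdecomp]
      exact congrFun (congrFun (pow_add (reducedT P) b ((k+1)+(a'+1))).symm x) t
    have h3 : (reducedT P ^ (k + c + 1)) x t ≤ tpow P (k + c + 1) i t := by
      rw [DTaux.tpow_eq]
      calc (reducedT P ^ (k + c + 1)) x t
          = (if x 0 = i then (reducedT P ^ (k + c + 1)) x t else 0) := (if_pos hx0).symm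
        _ ≤ ∑ u : Fin (r+1) → Fin n, if u 0 = i then (reducedT P ^ (k + c + 1)) u t else 0 :=
          Finset.single_le_sum (f := fun u => if u 0 = i then (reducedT P ^ (k + c + 1)) u t else 0)
            (fun u _ => by
              show 0 ≤ (if u 0 = i then (reducedT P ^ (k + c + 1)) u t else 0)
              by_cases h : u 0 = i
              · rw [if_pos h]; exact hq _ u t
              · rw [if_neg h]) (Finset.mem_univ x)
    calc ((reducedT P ^ b) x v * (reducedT P ^ (a'+1)) w t) * (reducedT P ^ (k+1)) v w
        = (reducedT P ^ b) x v
            * ((reducedT P ^ (k+1)) v w * (reducedT P ^ (a'+1)) w t) := by ring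
      _ ≤ (reducedT P ^ b) x v * (reducedT P ^ ((k+1)+(a'+1))) v t :=
          mul_le_mul_of_nonneg_left h1 (hq b x v)
      _ ≤ (reducedT P ^ (k + c + 1)) x t := h2
      _ ≤ tpow P (k + c + 1) i t := h3
  have hconst : 0 < (reducedT P ^ b) x v * (reducedT P ^ (a'+1)) w t := mul_pos hx hw
  have hs2 : Summable (fun k : ℕ =>
      ((reducedT P ^ b) x v * (reducedT P ^ (a'+1)) w t) * (reducedT P ^ (k+1)) v w) :=
    Summable.of_nonneg_of_le (fun k => mul_nonneg hconst.le (hq _ v w)) hbound hshift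
  exact (summable_mul_left_iff hconst.ne').1 hs2
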